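/- Let 0 ≤ R₀ < R₁ and let F : ℂ → ℂ be holomorphic on the annulus A(R₀,R₁) = {z ∈ ℂ : R₀ < |z| < R₁} with F(z) ≠ 0 for every z ∈ A(R₀,R₁). Then there exists a function G : ℂ → ℂ holomorphic on A(R₀,R₁) such that either F(z) = G(z)² for all z ∈ A(R₀,R₁), or F(z) = z·G(z)² for all z ∈ A(R₀,R₁). -/

import Mathlib

open Complex Set intervalIntegral Metric


lemma strip_primitive {J : Set ℝ} (hJo : IsOpen J) (hJc : Set.OrdConnected J)
    (x₀ : ℝ) (hx₀ : x₀ ∈ J) (H : ℂ → ℂ) (hH : DifferentiableOn ℂ H (Complex.re ⁻¹' J)) :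
    ∃ g : ℂ → ℂ, ∀ w : ℂ, w.re ∈ J → HasDerivAt g (H w) w := by
  set S : Set ℂ := Complex.re ⁻¹' J with hS
  have hSo : IsOpen S := hJo.preimage Complex.continuous_re
  have hHc : ContinuousOn H S := hH.continuousOn
  -- integrability of horizontal and vertical slices
  have hhor : ∀ a b y : ℝ, a ∈ J → b ∈ J →
      IntervalIntegrable (fun t : ℝ => H (t + y * I)) MeasureTheory.volume a b := by
    intro a b y ha hb
    apply ContinuousOn.intervalIntegrable
    apply hHc.comp (Continuous.continuousOn (by continuity))
    intro t ht
    simp only [hS, mem_preimage, Complex.add_re, Complex.ofReal_re, Complex.mul_re,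
      Complex.ofReal_im, Complex.I_re, Complex.I_im]
    simpa using hJc.uIcc_subset ha hb ht
  have hver : ∀ (x c d : ℝ), x ∈ J →
      IntervalIntegrable (fun s : ℝ => H (x + s * I)) MeasureTheory.volume c d := by
    intro x c d hx
    apply ContinuousOn.intervalIntegrable
    apply hHc.comp (Continuous.continuousOn (by continuity))
    intro s _
    simpa [hS, mem_preimage] using hx
  set g : ℂ → ℂ := fun w => (∫ t in x₀..w.re, H (t + (0:ℝ) * I)) +
      I * ∫ s in (0:ℝ)..w.im, H (w.re + s * I) with hg
  refine ⟨g, ?_⟩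
  intro w hw
  -- difference formula
  have diff : ∀ w' : ℂ, w'.re ∈ J →
      g w' - g w = (∫ t in w.re..w'.re, H (t + w'.im * I)) +
        I * ∫ s in w.im..w'.im, H (w.re + s * I) := by
    intro w' hw'
    have A1 : (∫ t in x₀..w.re, H (t + (0:ℝ) * I)) + (∫ t in w.re..w'.re, H (t + (0:ℝ) * I))
        = ∫ t in x₀..w'.re, H (t + (0:ℝ) * I) :=
      integral_add_adjacent_intervals (hhor _ _ _ hx₀ hw) (hhor _ _ _ hw hw')
    have A2 : (∫ s in (0:ℝ)..w.im, H (w.re + s * I)) + (∫ s in w.im..w'.im, H (w.re + s * I))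
        = ∫ s in (0:ℝ)..w'.im, H (w.re + s * I) :=
      integral_add_adjacent_intervals (hver _ _ _ hw) (hver _ _ _ hw)
    have A3 := Complex.integral_boundary_rect_eq_zero_of_differentiableOn H
      (⟨w.re, 0⟩ : ℂ) (⟨w'.re, w'.im⟩ : ℂ) (by
        apply hH.mono
        intro u hu
        rw [Complex.mem_reProdIm] at hu
        exact hJc.uIcc_subset hw hw' hu.1)
    simp only [smul_eq_mul] at A3
    simp only [hg, Complex.eta]
    linear_combination -A1 + A3 - I * A2
  rw [hasDerivAt_iff_isLittleO, Asymptotics.isLittleO_iff]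
  intro c hc
  have hcont : ContinuousAt H w := hHc.continuousAt (hSo.mem_nhds hw)
  obtain ⟨δ, hδ, hball⟩ := Metric.continuousAt_iff.mp hcont (c / 2) (half_pos hc)
  obtain ⟨ρ, hρ, hρS⟩ := Metric.isOpen_iff.mp hSo w hw
  rw [Metric.eventually_nhds_iff]
  refine ⟨min (δ / 2) ρ, lt_min (half_pos hδ) hρ, ?_⟩
  intro w' hw'd
  have hnear : dist w' w < δ / 2 := lt_of_lt_of_le hw'd (min_le_left _ _)
  have hw'S : w'.re ∈ J := hρS (lt_of_lt_of_le hw'd (min_le_right _ _))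
  have hd := diff w' hw'S
  -- rewrite the linear term as integrals of constants
  have hre : |w'.re - w.re| ≤ dist w' w := by
    have := Complex.abs_re_le_norm (w' - w)
    simpa [Complex.sub_re, Complex.dist_eq] using this
  have him : |w'.im - w.im| ≤ dist w' w := by
    have := Complex.abs_im_le_norm (w' - w)
    simpa [Complex.sub_im, Complex.dist_eq] using this
  have key1 : ‖∫ t in w.re..w'.re, (H (t + w'.im * I) - H w)‖ ≤ c / 2 * ‖w' - w‖ := by
    refine le_trans (intervalIntegral.norm_integral_le_of_norm_le_const (C := c/2) ?_) ?_
    · intro t ht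
      have h1 : |t - w.re| ≤ |w'.re - w.re| := abs_sub_left_of_mem_uIcc (Set.uIoc_subset_uIcc ht)
      have : dist (t + w'.im * I : ℂ) w < δ := by
        have heq : (t + w'.im * I : ℂ) - w = ((t - w.re : ℝ) : ℂ) + ((w'.im - w.im : ℝ) : ℂ) * I := by
          apply Complex.ext <;> simp
        have hb : dist (t + w'.im * I : ℂ) w ≤ |t - w.re| + |w'.im - w.im| := by
          rw [Complex.dist_eq, heq]
          refine le_trans (norm_add_le _ _) ?_
          rw [norm_mul, Complex.norm_I, mul_one, Complex.norm_real, Complex.norm_real,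
            Real.norm_eq_abs, Real.norm_eq_abs]
        calc dist (t + w'.im * I : ℂ) w ≤ |t - w.re| + |w'.im - w.im| := hb
          _ ≤ dist w' w + dist w' w := add_le_add (le_trans h1 hre) him
          _ < δ / 2 + δ / 2 := add_lt_add hnear hnear
          _ = δ := by ring
      rw [← dist_eq_norm]; exact le_of_lt (hball this)
    · have : |w'.re - w.re| ≤ ‖w' - w‖ := by
        simpa [Complex.dist_eq] using hre
      nlinarith [norm_nonneg (w' - w), hc.le]
  have key2 : ‖∫ s in w.im..w'.im, (H (w.re + s * I) - H w)‖ ≤ c / 2 * ‖w' - w‖ := by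
    refine le_trans (intervalIntegral.norm_integral_le_of_norm_le_const (C := c/2) ?_) ?_
    · intro s hs
      have h1 : |s - w.im| ≤ |w'.im - w.im| := abs_sub_left_of_mem_uIcc (Set.uIoc_subset_uIcc hs)
      have : dist (w.re + s * I : ℂ) w < δ := by
        have heq : (w.re + s * I : ℂ) - w = ((s - w.im : ℝ) : ℂ) * I := by
          apply Complex.ext <;> simp
        have hb : dist (w.re + s * I : ℂ) w ≤ |s - w.im| := by
          rw [Complex.dist_eq, heq, norm_mul, Complex.norm_I, mul_one, Complex.norm_real, Real.norm_eq_abs]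
        calc dist (w.re + s * I : ℂ) w ≤ |s - w.im| := hb
          _ ≤ dist w' w := le_trans h1 him
          _ < δ / 2 := hnear
          _ ≤ δ := by linarith
      rw [← dist_eq_norm]; exact le_of_lt (hball this)
    · have : |w'.im - w.im| ≤ ‖w' - w‖ := by
        simpa [Complex.dist_eq] using him
      nlinarith [norm_nonneg (w' - w), hc.le]
  -- put everything together
  have hsplit : g w' - g w - (w' - w) • H w
      = (∫ t in w.re..w'.re, (H (t + w'.im * I) - H w)) +
        I * ∫ s in w.im..w'.im, (H (w.re + s * I) - H w) := by
    rw [intervalIntegral.integral_sub (hhor _ _ _ hw hw'S) intervalIntegrable_const,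
      intervalIntegral.integral_sub (hver _ _ _ hw) intervalIntegrable_const,
      intervalIntegral.integral_const, intervalIntegral.integral_const, hd]
    have hww' : w' - w = ((w'.re - w.re : ℝ) : ℂ) + ((w'.im - w.im : ℝ) : ℂ) * I := by
      apply Complex.ext <;> simp
    rw [smul_eq_mul, hww']
    simp only [real_smul]
    push_cast
    ring
  rw [hsplit]
  calc ‖(∫ t in w.re..w'.re, (H (t + w'.im * I) - H w)) +
        I * ∫ s in w.im..w'.im, (H (w.re + s * I) - H w)‖
      ≤ ‖∫ t in w.re..w'.re, (H (t + w'.im * I) - H w)‖ +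
        ‖I * ∫ s in w.im..w'.im, (H (w.re + s * I) - H w)‖ := norm_add_le _ _
    _ ≤ c / 2 * ‖w' - w‖ + c / 2 * ‖w' - w‖ := by
        refine add_le_add key1 ?_
        rw [norm_mul, Complex.norm_I, one_mul]
        exact key2
    _ = c * ‖w' - w‖ := by ring



lemma strip_log {J : Set ℝ} (hJo : IsOpen J) (hJc : Set.OrdConnected J)
    (x₀ : ℝ) (hx₀ : x₀ ∈ J) (H : ℂ → ℂ) (hH : DifferentiableOn ℂ H (Complex.re ⁻¹' J))
    (hH0 : ∀ w : ℂ, w.re ∈ J → H w ≠ 0) :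
    ∃ L : ℂ → ℂ, (∀ w : ℂ, w.re ∈ J → DifferentiableAt ℂ L w) ∧
      (∀ w : ℂ, w.re ∈ J → Complex.exp (L w) = H w) := by
  set S : Set ℂ := Complex.re ⁻¹' J with hS
  have hSo : IsOpen S := hJo.preimage Complex.continuous_re
  have hJconv : Convex ℝ J := convex_iff_ordConnected.mpr hJc
  have hSconv : Convex ℝ S := by
    have := hJconv.linear_preimage Complex.reLm
    simpa [Complex.reLm_coe] using this
  have hq : DifferentiableOn ℂ (fun w => deriv H w / H w) S := by
    refine DifferentiableOn.div ?_ hH (fun w hw => hH0 w hw)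
    exact ((hH.analyticOnNhd hSo).deriv).differentiableOn
  obtain ⟨g, hg⟩ := strip_primitive hJo hJc x₀ hx₀ _ hq
  -- H * exp (-g) is constant on S
  have hzero : ∀ w ∈ S, HasDerivAt (fun u => H u * Complex.exp (-g u)) 0 w := by
    intro w hw
    have hHd : HasDerivAt H (deriv H w) w :=
      (hH.differentiableAt (hSo.mem_nhds hw)).hasDerivAt
    have hgd : HasDerivAt g (deriv H w / H w) w := hg w hw
    have he : HasDerivAt (fun u => Complex.exp (-g u))
        (Complex.exp (-g w) * -(deriv H w / H w)) w := (hgd.neg).cexp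
    have := hHd.mul he
    have hval : deriv H w * Complex.exp (-g w) + H w * (Complex.exp (-g w) * -(deriv H w / H w))
        = 0 := by
      linear_combination (-(Complex.exp (-g w) * deriv H w)) * mul_inv_cancel₀ (hH0 w hw)
    rw [hval] at this
    exact this
  have hconst : ∀ w ∈ S, H w * Complex.exp (-g w) = H (x₀ : ℂ) * Complex.exp (-g (x₀ : ℂ)) := by
    have hx₀S : (x₀ : ℂ) ∈ S := by simpa [hS] using hx₀
    intro w hw
    refine hSconv.is_const_of_fderivWithin_eq_zero
      (fun u hu => ((hzero u hu).differentiableAt).differentiableWithinAt) ?_ hw hx₀S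
    intro u hu
    rw [fderivWithin_of_isOpen hSo hu]
    have h' := (hzero u hu).hasFDerivAt.fderiv
    rw [h']
    ext
    simp
  have hx₀S : (x₀ : ℂ) ∈ S := by simpa [hS] using hx₀
  have hcne : H (x₀ : ℂ) * Complex.exp (-g (x₀ : ℂ)) ≠ 0 :=
    mul_ne_zero (hH0 _ (by simpa [hS] using hx₀)) (Complex.exp_ne_zero _)
  obtain ⟨d, hd⟩ : ∃ d, Complex.exp d = H (x₀ : ℂ) * Complex.exp (-g (x₀ : ℂ)) := by
    have : H (x₀ : ℂ) * Complex.exp (-g (x₀ : ℂ)) ∈ Set.range Complex.exp := by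
      rw [Complex.range_exp]; exact hcne
    exact this.imp fun d h => h
  refine ⟨fun w => g w + d, ?_, ?_⟩
  · intro w hw
    exact ((hg w hw).differentiableAt).add_const d
  · intro w hw
    have := hconst w hw
    rw [Complex.exp_add, hd, ← this, Complex.exp_neg]
    field_simp



-- a nonzero integer multiple of 2πI has norm > 1
lemma int_mul_two_pi_small {m : ℤ} (h : ‖(m : ℂ) * (2 * Real.pi * I)‖ < 1) : m = 0 := by
  by_contra hm
  have h1 : (1:ℝ) ≤ |(m:ℝ)| := by
    rw [← Int.cast_abs]
    exact_mod_cast Int.one_le_abs (by omega)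
  have : ‖(m : ℂ) * (2 * Real.pi * I)‖ = |(m:ℝ)| * (2 * Real.pi) := by
    simp [norm_mul, Complex.norm_real, abs_of_pos Real.pi_pos,
      Complex.norm_intCast, mul_assoc]
  rw [this] at h
  nlinarith [Real.pi_gt_three]

lemma winding_const {J : Set ℝ} (hJo : IsOpen J) (hJc : Set.OrdConnected J)
    (L : ℂ → ℂ) (hLd : ∀ w : ℂ, w.re ∈ J → DifferentiableAt ℂ L w)
    (hper : ∀ w : ℂ, w.re ∈ J → ∃ m : ℤ,
      L (w + 2 * Real.pi * I) - L w = (m : ℂ) * (2 * Real.pi * I))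
    (w₀ : ℂ) (hw₀ : w₀.re ∈ J) :
    ∀ w : ℂ, w.re ∈ J →
      L (w + 2 * Real.pi * I) - L w = L (w₀ + 2 * Real.pi * I) - L w₀ := by
  set S : Set ℂ := Complex.re ⁻¹' J with hS
  have hSo : IsOpen S := hJo.preimage Complex.continuous_re
  set ν : ℂ → ℂ := fun w => L (w + 2 * Real.pi * I) - L w with hν
  have hresh : ∀ w : ℂ, (w + 2 * Real.pi * I).re = w.re := by intro w; simp
  have hνc : ∀ w ∈ S, ContinuousAt ν w := by
    intro w hw
    have h1 : DifferentiableAt ℂ (fun u => L (u + 2 * Real.pi * I)) w := by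
      have := (hLd (w + 2 * Real.pi * I) (by rw [hresh]; exact hw)).comp w
        ((differentiableAt_id.add_const (2 * (Real.pi : ℂ) * I)))
      exact this
    exact (h1.sub (hLd w hw)).continuousAt
  have hloc : ∀ w ∈ S, ∃ ε > 0, ball w ε ⊆ S ∧ ∀ u ∈ ball w ε, ν u = ν w := by
    intro w hw
    obtain ⟨ε₁, hε₁, hball⟩ := Metric.continuousAt_iff.mp (hνc w hw) 1 one_pos
    obtain ⟨ε₂, hε₂, hS2⟩ := Metric.isOpen_iff.mp hSo w hw
    refine ⟨min ε₁ ε₂, lt_min hε₁ hε₂, ?_, ?_⟩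
    · exact fun u hu => hS2 (mem_ball.mpr (lt_of_lt_of_le (mem_ball.mp hu) (min_le_right _ _)))
    · intro u hu
      have huS : u ∈ S := hS2 (mem_ball.mpr (lt_of_lt_of_le (mem_ball.mp hu) (min_le_right _ _)))
      obtain ⟨mu, hmu⟩ := hper u huS
      obtain ⟨mw, hmw⟩ := hper w hw
      have hdist : dist (ν u) (ν w) < 1 := hball (lt_of_lt_of_le (mem_ball.mp hu) (min_le_left _ _))
      have hsub : ν u - ν w = ((mu - mw : ℤ) : ℂ) * (2 * Real.pi * I) := by
        rw [hν]
        push_cast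
        rw [show (L (u + 2*Real.pi*I) - L u) = ν u from rfl,
          show (L (w + 2*Real.pi*I) - L w) = ν w from rfl] at *
        rw [hmu, hmw]; ring
      have : mu - mw = 0 := by
        apply int_mul_two_pi_small
        rw [← hsub]
        rwa [dist_eq_norm] at hdist
      have heq : mu = mw := by omega
      show L (u + 2 * Real.pi * I) - L u = L (w + 2 * Real.pi * I) - L w
      rw [hmu, hmw, heq]
  obtain ⟨m₀, hm₀⟩ := hper w₀ hw₀
  set U : Set ℂ := {w | w ∈ S ∧ ν w = ν w₀} with hU
  set V : Set ℂ := {w | w ∈ S ∧ ν w ≠ ν w₀} with hV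
  have hUo : IsOpen U := by
    rw [Metric.isOpen_iff]
    rintro w ⟨hwS, hwv⟩
    obtain ⟨ε, hε, hb, hcst⟩ := hloc w hwS
    exact ⟨ε, hε, fun u hu => ⟨hb hu, (hcst u hu).trans hwv⟩⟩
  have hVo : IsOpen V := by
    rw [Metric.isOpen_iff]
    rintro w ⟨hwS, hwv⟩
    obtain ⟨ε, hε, hb, hcst⟩ := hloc w hwS
    exact ⟨ε, hε, fun u hu => ⟨hb hu, (hcst u hu).symm ▸ hwv⟩⟩
  intro w hw
  by_contra hne
  have hpre : IsPreconnected S := by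
    have hJconv : Convex ℝ J := convex_iff_ordConnected.mpr hJc
    have : Convex ℝ S := by
      have := hJconv.linear_preimage Complex.reLm
      simpa [Complex.reLm_coe] using this
    exact this.isPreconnected
  have hcover : S ⊆ U ∪ V := by
    intro u hu
    by_cases h : ν u = ν w₀
    · exact Or.inl ⟨hu, h⟩
    · exact Or.inr ⟨hu, h⟩
  obtain ⟨u, ⟨-, ⟨-, h1⟩, -, h2⟩⟩ :=
    hpre U V hUo hVo hcover ⟨w₀, hw₀, hw₀, rfl⟩ ⟨w, hw, hw, hne⟩
  exact h2 h1



theorem stmt_0 (R₀ R₁ : ℝ) (hR₀ : 0 ≤ R₀) (hR : R₀ < R₁) (F : ℂ → ℂ)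
    (A : Set ℂ) (hA : A = {z : ℂ | R₀ < ‖z‖ ∧ ‖z‖ < R₁})
    (hF : DifferentiableOn ℂ F A) (hF0 : ∀ z ∈ A, F z ≠ 0) :
    ∃ G : ℂ → ℂ, DifferentiableOn ℂ G A ∧
      ((∀ z ∈ A, F z = (G z) ^ 2) ∨ (∀ z ∈ A, F z = z * (G z) ^ 2)) := by
  set J : Set ℝ := {x | R₀ < Real.exp x ∧ Real.exp x < R₁} with hJ
  have hJo : IsOpen J := by
    have : J = Real.exp ⁻¹' (Set.Ioo R₀ R₁) := rfl
    rw [this]; exact isOpen_Ioo.preimage Real.continuous_exp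
  have hJc : Set.OrdConnected J := by
    constructor
    rintro x ⟨hx1, hx2⟩ y ⟨hy1, hy2⟩ t ⟨ht1, ht2⟩
    exact ⟨lt_of_lt_of_le hx1 (Real.exp_le_exp.mpr ht1),
      lt_of_le_of_lt (Real.exp_le_exp.mpr ht2) hy2⟩
  have hmem : ∀ w : ℂ, Complex.exp w ∈ A ↔ w.re ∈ J := by
    intro w; rw [hA]; simp [Complex.norm_exp, hJ]
  have hH0 : ∀ w : ℂ, w.re ∈ J → F (Complex.exp w) ≠ 0 :=
    fun w hw => hF0 _ ((hmem w).mpr hw)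
  have hHd : DifferentiableOn ℂ (fun w => F (Complex.exp w)) (Complex.re ⁻¹' J) := by
    apply hF.comp Complex.differentiable_exp.differentiableOn
    intro w hw
    exact (hmem w).mpr hw
  have hmid1 : R₀ < (R₀ + R₁) / 2 := by linarith
  have hmid2 : (R₀ + R₁) / 2 < R₁ := by linarith
  have hmidpos : 0 < (R₀ + R₁) / 2 := by linarith
  set x₀ : ℝ := Real.log ((R₀ + R₁) / 2) with hx₀def
  have hx₀ : x₀ ∈ J := by
    rw [hJ]
    constructor <;> rw [hx₀def, Real.exp_log hmidpos] <;> assumption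
  obtain ⟨L, hLd, hLe⟩ := strip_log hJo hJc x₀ hx₀ _ hHd hH0
  have hresh : ∀ w : ℂ, (w + 2 * Real.pi * I).re = w.re := fun w => by simp
  have hper : ∀ w : ℂ, w.re ∈ J → ∃ m : ℤ,
      L (w + 2 * Real.pi * I) - L w = (m : ℂ) * (2 * Real.pi * I) := by
    intro w hw
    have h1 : Complex.exp (L (w + 2 * Real.pi * I)) = Complex.exp (L w) := by
      rw [hLe _ (by rw [hresh]; exact hw), hLe _ hw, Complex.exp_add,
        Complex.exp_two_pi_mul_I, mul_one]
    obtain ⟨m, hm⟩ := Complex.exp_eq_exp_iff_exists_int.mp h1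
    exact ⟨m, by rw [hm]; ring⟩
  set w₀ : ℂ := (x₀ : ℂ) with hw₀def
  have hw₀ : w₀.re ∈ J := by simpa [hw₀def] using hx₀
  obtain ⟨n, hn⟩ := hper w₀ hw₀
  have hwind := winding_const hJo hJc L hLd hper w₀ hw₀
  have hLper : ∀ w : ℂ, w.re ∈ J →
      L (w + 2 * Real.pi * I) = L w + (n : ℂ) * (2 * Real.pi * I) := by
    intro w hw
    have h1 := hwind w hw
    rw [hn] at h1
    linear_combination h1
  set M : ℂ → ℂ := fun w => L w - (n : ℂ) * w with hM
  have hMd : ∀ w : ℂ, w.re ∈ J → DifferentiableAt ℂ M w := by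
    intro w hw
    exact (hLd w hw).sub (differentiableAt_id.const_mul _)
  have hMper1 : ∀ w : ℂ, w.re ∈ J → M (w + 2 * Real.pi * I) = M w := by
    intro w hw
    show L (w + 2 * Real.pi * I) - (n : ℂ) * (w + 2 * Real.pi * I) = L w - (n : ℂ) * w
    rw [hLper w hw]; ring
  have hMper : ∀ w : ℂ, w.re ∈ J → ∀ m : ℤ,
      M (w + (m : ℂ) * (2 * Real.pi * I)) = M w := by
    intro w hw m
    induction m using Int.induction_on with
    | zero => simp
    | succ i ih =>
      have hre : (w + (i : ℂ) * (2 * Real.pi * I)).re = w.re := by simp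
      have h2 := hMper1 (w + (i : ℂ) * (2 * Real.pi * I)) (by rw [hre]; exact hw)
      have harg : w + ((i : ℤ) + 1 : ℂ) * (2 * Real.pi * I)
          = (w + (i : ℂ) * (2 * Real.pi * I)) + 2 * Real.pi * I := by push_cast; ring
      rw [show ((i + 1 : ℤ) : ℂ) = ((i : ℤ) + 1 : ℂ) by push_cast; ring, harg, h2]
      exact_mod_cast ih
    | pred i ih =>
      have hre : (w + (-(i : ℂ) - 1) * (2 * Real.pi * I)).re = w.re := by simp
      have h2 := hMper1 (w + (-(i : ℂ) - 1) * (2 * Real.pi * I)) (by rw [hre]; exact hw)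
      have harg : (w + (-(i : ℂ) - 1) * (2 * Real.pi * I)) + 2 * Real.pi * I
          = w + (-(i : ℤ) : ℂ) * (2 * Real.pi * I) := by push_cast; ring
      have hcast : ((-(i : ℤ) - 1 : ℤ) : ℂ) = -(i : ℂ) - 1 := by push_cast; ring
      rw [hcast, ← h2, harg]
      have := ih
      push_cast at this ⊢
      exact this
  have hFw : ∀ w : ℂ, w.re ∈ J →
      F (Complex.exp w) = Complex.exp (M w) * (Complex.exp w) ^ n := by
    intro w hw
    rw [← Complex.exp_int_mul, ← Complex.exp_add]
    have harg : M w + (n : ℂ) * w = L w := by rw [hM]; ring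
    rw [harg, hLe w hw]
  -- back to the annulus
  have hA_open : IsOpen A := by
    rw [hA]
    have : {z : ℂ | R₀ < ‖z‖ ∧ ‖z‖ < R₁}
        = (fun z : ℂ => ‖z‖) ⁻¹' Set.Ioo R₀ R₁ := rfl
    rw [this]; exact isOpen_Ioo.preimage continuous_norm
  have hz0 : ∀ z ∈ A, z ≠ 0 := by
    intro z hz h0
    rw [hA, h0] at hz
    simp at hz
    linarith [hz.1]
  have hlogJ : ∀ z ∈ A, (Complex.log z).re ∈ J := by
    intro z hz
    have habs : 0 < ‖z‖ := by
      rw [hA] at hz; exact lt_of_le_of_lt hR₀ hz.1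
    rw [Complex.log_re, hJ]
    constructor <;> rw [Real.exp_log habs]
    · rw [hA] at hz; exact hz.1
    · rw [hA] at hz; exact hz.2
  obtain ⟨k, r, hr, hnkr⟩ : ∃ k r : ℤ, (r = 0 ∨ r = 1) ∧ n = k + k + r := by
    rcases Int.even_or_odd n with ⟨k', hk'⟩ | ⟨k', hk'⟩
    · exact ⟨k', 0, Or.inl rfl, by omega⟩
    · exact ⟨k', 1, Or.inr rfl, by omega⟩
  set G : ℂ → ℂ := fun z => z ^ k * Complex.exp (M (Complex.log z) / 2) with hG
  have hsq : ∀ z ∈ A, (G z) ^ 2 = z ^ (k + k) * Complex.exp (M (Complex.log z)) := by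
    intro z hz
    have hz' := hz0 z hz
    show (z ^ k * Complex.exp (M (Complex.log z) / 2)) ^ 2 = _
    rw [mul_pow, sq, sq, ← zpow_add₀ hz', ← Complex.exp_add, add_halves]
  have hFz : ∀ z ∈ A, F z = Complex.exp (M (Complex.log z)) * z ^ n := by
    intro z hz
    have := hFw (Complex.log z) (hlogJ z hz)
    rwa [Complex.exp_log (hz0 z hz)] at this
  have hGd : DifferentiableOn ℂ G A := by
    intro z hzA
    apply DifferentiableAt.differentiableWithinAt
    have hz' : z ≠ 0 := hz0 z hzA
    set ℓ : ℂ → ℂ := fun u => Complex.log z + Complex.log (u / z) with hℓ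
    have hone : (1 : ℂ) ∈ Complex.slitPlane := by
      rw [Complex.mem_slitPlane_iff]; simp
    have hℓd : DifferentiableAt ℂ ℓ z := by
      have h1 : DifferentiableAt ℂ (fun u : ℂ => u / z) z := differentiableAt_id.div_const z
      have h2 : DifferentiableAt ℂ Complex.log (z / z) := by
        rw [div_self hz']; exact Complex.differentiableAt_log hone
      exact (differentiableAt_const _).add (DifferentiableAt.comp (g := Complex.log) (f := fun u : ℂ => u / z) z h2 h1)
    have hℓz : ℓ z = Complex.log z := by
      rw [hℓ]; simp [div_self hz', Complex.log_one]
    have hexpℓ : ∀ u : ℂ, u ≠ 0 → Complex.exp (ℓ u) = u := by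
      intro u hu
      rw [hℓ]
      show Complex.exp (Complex.log z + Complex.log (u / z)) = u
      rw [Complex.exp_add, Complex.exp_log hz', Complex.exp_log (div_ne_zero hu hz')]
      field_simp
    have hEq : (fun u => Complex.exp (M (Complex.log u) / 2)) =ᶠ[nhds z]
        (fun u => Complex.exp (M (ℓ u) / 2)) := by
      filter_upwards [hA_open.mem_nhds hzA] with u huA
      have hu' : u ≠ 0 := hz0 u huA
      have h1 : Complex.exp (ℓ u) = Complex.exp (Complex.log u) := by
        rw [hexpℓ u hu', Complex.exp_log hu']
      obtain ⟨m, hm⟩ := Complex.exp_eq_exp_iff_exists_int.mp h1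
      have h3 := hMper (Complex.log u) (hlogJ u huA) m
      rw [hm, show Complex.log u + (m : ℂ) * (2 * Real.pi * I)
        = Complex.log u + (m : ℂ) * (2 * Real.pi * I) from rfl, h3]
    have hMd' : DifferentiableAt ℂ (fun u => Complex.exp (M (ℓ u) / 2)) z := by
      have h3 : DifferentiableAt ℂ M (ℓ z) := by
        rw [hℓz]; exact hMd _ (hlogJ z hzA)
      exact ((h3.comp z hℓd).div_const 2).cexp
    have hpart2 : DifferentiableAt ℂ (fun u => Complex.exp (M (Complex.log u) / 2)) z :=
      (hEq.differentiableAt_iff).mpr hMd'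
    exact (differentiableAt_zpow.mpr (Or.inl hz')).mul hpart2
  refine ⟨G, hGd, ?_⟩
  rcases hr with hr0 | hr1
  · left
    intro z hzA
    have hz' := hz0 z hzA
    have h1 := hFz z hzA
    have h2 := hsq z hzA
    rw [hnkr, hr0, add_zero] at h1
    rw [h1, h2]; ring
  · right
    intro z hzA
    have hz' := hz0 z hzA
    have h1 := hFz z hzA
    have h2 := hsq z hzA
    rw [hnkr, hr1] at h1
    rw [h1, h2, zpow_add₀ hz', zpow_one]; ring
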